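/- Let a : K^p → F^g be an annotation of the p-simplices of a simplicial complex K with values in F^g, for a field F, extended linearly to p-chains. Then a is valid (meaning g = rank H_p(K; F) and two p-cycles z₁, z₂ satisfy a_{z₁} = a_{z₂} iff [z₁] = [z₂] in H_p(K; F)) if and only if the g cochains φ_j defined by φ_j(σ) = a_σ[j] for all p-simplices σ are all cocycles and their cohomology classes {[φ_j]}_{j=1,…,g} form a basis of H^p(K; F). -/

import Mathlib

set_option linter.unusedSectionVars false
set_option maxHeartbeats 1000000
set_option synthInstance.maxHeartbeats 1000000

/-- The annotation of a chain `c = Σ c σ • σ`, extended linearly from the annotation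
of the simplices. -/
noncomputable def annChain {F : Type*} [Field F] {ι : Type*} [Fintype ι] {g : ℕ}
    (a : ι → Fin g → F) (c : ι → F) : Fin g → F :=
  ∑ σ : ι, c σ • a σ

/-- The homology class of a cycle `z` (an element of `ker dlow`), in the homology group
`ker dlow ⧸ im dhigh`, where `dlow` is the boundary map out of `p`-chains and `dhigh` the
boundary map into `p`-chains. -/
noncomputable def homCls {F : Type*} [Field F] {ι κ μ : Type*}
    (dlow : (ι → F) →ₗ[F] (κ → F)) (dhigh : (μ → F) →ₗ[F] (ι → F))
    (z : ι → F) (hz : z ∈ LinearMap.ker dlow) :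
    (LinearMap.ker dlow) ⧸
      (LinearMap.range dhigh).comap (LinearMap.ker dlow).subtype :=
  Submodule.Quotient.mk ⟨z, hz⟩

/-- An annotation `a : K^p → F^g` is valid if `g = dim H_p` and two cycles have equal
annotations iff their homology classes coincide. -/
noncomputable def IsValidAnnotation {F : Type*} [Field F] {ι κ μ : Type*} [Fintype ι]
    {g : ℕ} (dlow : (ι → F) →ₗ[F] (κ → F)) (dhigh : (μ → F) →ₗ[F] (ι → F))
    (a : ι → Fin g → F) : Prop :=
  g = Module.finrank F ((LinearMap.ker dlow) ⧸
        (LinearMap.range dhigh).comap (LinearMap.ker dlow).subtype) ∧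
  ∀ z₁ z₂ (h₁ : z₁ ∈ LinearMap.ker dlow) (h₂ : z₂ ∈ LinearMap.ker dlow),
    (annChain a z₁ = annChain a z₂ ↔ homCls dlow dhigh z₁ h₁ = homCls dlow dhigh z₂ h₂)

/-- The simplicial coboundary map induced by a boundary map `d` on chains:
`(coboundary d) φ = φ ∘ d` under the standard pairing of cochains and chains. -/
noncomputable def coboundary {F : Type*} [Field F] {α β : Type*} [DecidableEq α]
    [Fintype β] (d : (α → F) →ₗ[F] (β → F)) : (β → F) →ₗ[F] (α → F) :=
  (Matrix.of fun (x : α) (y : β) => d (Pi.single x 1) y).mulVecLin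

section Aux

open Module Matrix Finset

variable {F : Type*} [Field F] {ι : Type*} [Fintype ι]

/-- The pairing as a linear map into the dual. -/
noncomputable def dotPair : (ι → F) →ₗ[F] Module.Dual F (ι → F) :=
  LinearMap.mk₂ F (fun u v => dotProduct u v)
    (fun _ _ _ => add_dotProduct _ _ _)
    (fun _ _ _ => smul_dotProduct _ _ _)
    (fun _ _ _ => dotProduct_add _ _ _)
    (fun _ _ _ => dotProduct_smul _ _ _)

lemma dotPair_apply (u v : ι → F) : dotPair u v = dotProduct u v := rfl

lemma dotPair_injective : Function.Injective (dotPair (F := F) (ι := ι)) := by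
  classical
  rw [injective_iff_map_eq_zero]
  intro u hu
  funext i
  have := congrArg (fun f => f (Pi.single i 1)) hu
  simpa [dotPair_apply, dotProduct_single] using this

lemma dotPair_bijective : Function.Bijective (dotPair (F := F) (ι := ι)) := by
  refine ⟨dotPair_injective, ?_⟩
  have h1 : Module.finrank F (Module.Dual F (ι → F)) = Module.finrank F (ι → F) :=
    Subspace.dual_finrank_eq
  rw [← LinearMap.range_eq_top]
  apply Submodule.eq_top_of_finrank_eq
  rw [LinearMap.finrank_range_of_inj dotPair_injective, h1]

/-- The linear equivalence between the space and its dual given by the dot product. -/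
noncomputable def dotEquiv : (ι → F) ≃ₗ[F] Module.Dual F (ι → F) :=
  LinearEquiv.ofBijective dotPair dotPair_bijective

/-- The orthogonal complement of a subspace under the dot-product pairing. -/
noncomputable def dotAnn (W : Submodule F (ι → F)) : Submodule F (ι → F) :=
  W.dualAnnihilator.comap (dotPair (F := F) (ι := ι))

lemma mem_dotAnn {W : Submodule F (ι → F)} {u : ι → F} :
    u ∈ dotAnn W ↔ ∀ w ∈ W, dotProduct u w = 0 := by
  rw [dotAnn, Submodule.mem_comap, Submodule.mem_dualAnnihilator]
  rfl

lemma finrank_dotAnn_add (W : Submodule F (ι → F)) :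
    Module.finrank F (dotAnn W) + Module.finrank F W = Module.finrank F (ι → F) := by
  have h1 : Module.finrank F (dotAnn W) = Module.finrank F W.dualAnnihilator := by
    have e : dotAnn W ≃ₗ[F] W.dualAnnihilator :=
      LinearEquiv.ofSubmodule' (dotEquiv (F := F) (ι := ι)) W.dualAnnihilator
    exact e.finrank_eq
  have h2 : Module.finrank F ((ι → F) ⧸ W) = Module.finrank F W.dualAnnihilator :=
    LinearEquiv.finrank_eq (Subspace.quotEquivAnnihilator W)
  rw [h1, ← h2, Submodule.finrank_quotient_add_finrank]

lemma dotAnn_dotAnn (W : Submodule F (ι → F)) : dotAnn (dotAnn W) = W := by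
  have hle : W ≤ dotAnn (dotAnn W) := by
    intro w hw
    rw [mem_dotAnn]
    intro u hu
    rw [dotProduct_comm]
    exact (mem_dotAnn.mp hu) w hw
  have h1 := finrank_dotAnn_add (F := F) (ι := ι) W
  have h2 := finrank_dotAnn_add (F := F) (ι := ι) (dotAnn W)
  exact (Submodule.eq_of_le_of_finrank_le hle (by omega)).symm

lemma dotAnn_antitone {W W' : Submodule F (ι → F)} (h : W ≤ W') :
    dotAnn W' ≤ dotAnn W := by
  intro u hu
  rw [mem_dotAnn] at hu ⊢
  exact fun w hw => hu w (h hw)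

end Aux

section Cob

open Module Matrix Finset

variable {F : Type*} [Field F] {α β : Type*} [Fintype α] [Fintype β] [DecidableEq α]

lemma coboundary_apply (d : (α → F) →ₗ[F] (β → F)) (φ : β → F) (x : α) :
    coboundary d φ x = dotProduct (fun y => d (Pi.single x 1) y) φ := rfl

lemma coboundary_adjoint (d : (α → F) →ₗ[F] (β → F)) (φ : β → F) (c : α → F) :
    dotProduct (coboundary d φ) c = dotProduct φ (d c) := by
  have hc : ∀ y, d c y = ∑ x : α, c x * d (Pi.single x 1) y := by
    intro y
    have h : c = ∑ x : α, c x • (Pi.single x 1 : α → F) := by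
      funext i
      simp [Pi.single_apply]
    conv_lhs => rw [h]
    rw [map_sum]
    simp [Finset.sum_apply]
  simp only [dotProduct, coboundary_apply, dotProduct, hc,
    Finset.sum_mul, Finset.mul_sum]
  rw [Finset.sum_comm]
  refine Finset.sum_congr rfl fun x _ => Finset.sum_congr rfl fun y _ => by ring

lemma mem_ker_coboundary (d : (α → F) →ₗ[F] (β → F)) (φ : β → F) :
    φ ∈ LinearMap.ker (coboundary d) ↔ ∀ c, dotProduct φ (d c) = 0 := by
  constructor
  · intro h c
    rw [← coboundary_adjoint, LinearMap.mem_ker.mp h]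
    simp
  · intro h
    rw [LinearMap.mem_ker]
    funext x
    rw [coboundary_apply, dotProduct_comm]
    exact h (Pi.single x (1 : F))

lemma ker_coboundary_eq (d : (α → F) →ₗ[F] (β → F)) :
    LinearMap.ker (coboundary d) = dotAnn (LinearMap.range d) := by
  ext φ
  rw [mem_ker_coboundary, mem_dotAnn]
  constructor
  · rintro h w ⟨c, rfl⟩
    exact h c
  · intro h c
    exact h (d c) ⟨c, rfl⟩

lemma range_coboundary_eq (d : (α → F) →ₗ[F] (β → F)) :
    LinearMap.range (coboundary d) = dotAnn (LinearMap.ker d) := by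
  have hle : LinearMap.range (coboundary d) ≤ dotAnn (LinearMap.ker d) := by
    rintro _ ⟨ψ, rfl⟩
    rw [mem_dotAnn]
    intro z hz
    rw [coboundary_adjoint, LinearMap.mem_ker.mp hz]
    simp
  have hM : (Matrix.of fun (x : α) (y : β) => d (Pi.single x 1) y)
      = (LinearMap.toMatrix' d)ᵀ := by
    ext x y
    rw [Matrix.of_apply, Matrix.transpose_apply, LinearMap.toMatrix'_apply]
  have hrk : Module.finrank F (LinearMap.range (coboundary d))
      = Module.finrank F (LinearMap.range d) := by
    have h1 : coboundary d = ((LinearMap.toMatrix' d)ᵀ).mulVecLin := by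
      rw [coboundary, hM]
    have h2 : ((LinearMap.toMatrix' d)).mulVecLin = d := by
      rw [← Matrix.toLin'_apply', Matrix.toLin'_toMatrix']
    calc Module.finrank F (LinearMap.range (coboundary d))
        = ((LinearMap.toMatrix' d)ᵀ).rank := by rw [h1]; rfl
      _ = (LinearMap.toMatrix' d).rank := Matrix.rank_transpose _
      _ = Module.finrank F (LinearMap.range d) := by rw [Matrix.rank, h2]
  have h3 := finrank_dotAnn_add (LinearMap.ker d)
  have h4 := LinearMap.finrank_range_add_finrank_ker d
  refine Submodule.eq_of_le_of_finrank_le hle ?_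
  omega

end Cob

section Main

open Module Matrix Finset

variable {F : Type*} [Field F] {ι : Type*} [Fintype ι] [DecidableEq ι] {g : ℕ}

lemma annChain_apply (a : ι → Fin g → F) (c : ι → F) (j : Fin g) :
    annChain a c j = dotProduct (fun σ => a σ j) c := by
  simp [annChain, dotProduct, Finset.sum_apply, mul_comm]

/-- The annotation map as a linear map. -/
noncomputable def annMap (a : ι → Fin g → F) : (ι → F) →ₗ[F] (Fin g → F) where
  toFun := annChain a
  map_add' x y := by
    simp [annChain, add_smul, Finset.sum_add_distrib]
  map_smul' r x := by
    simp [annChain, smul_smul, Finset.smul_sum]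

lemma homCls_eq_iff {κ μ : Type*} (dlow : (ι → F) →ₗ[F] (κ → F))
    (dhigh : (μ → F) →ₗ[F] (ι → F)) {z₁ z₂ : ι → F}
    (h₁ : z₁ ∈ LinearMap.ker dlow) (h₂ : z₂ ∈ LinearMap.ker dlow) :
    homCls dlow dhigh z₁ h₁ = homCls dlow dhigh z₂ h₂ ↔
      z₁ - z₂ ∈ LinearMap.range dhigh := by
  rw [homCls, homCls, Submodule.Quotient.eq]
  simp [Submodule.mem_comap]

end Main

section Main2

open Module Matrix Finset

variable {F : Type*} [Field F] {ι : Type*} [Fintype ι] {g : ℕ}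

lemma dot_sum_smul (c : Fin g → F) (φ : Fin g → (ι → F)) (z : ι → F) :
    dotProduct (∑ j, c j • φ j) z = ∑ j, c j * dotProduct (φ j) z := by
  simp only [dotProduct, Finset.sum_apply, Pi.smul_apply, smul_eq_mul,
    Finset.sum_mul, Finset.mul_sum]
  rw [Finset.sum_comm]
  exact Finset.sum_congr rfl fun j _ => Finset.sum_congr rfl fun i _ => by ring

end Main2

/-- Proposition 1 of the paper: an annotation `a : K^p → F^g` is valid iff the cochains
`φ_j(σ) = a_σ[j]` are cocycles whose cohomology classes form a basis of `H^p(K; F)`.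
Here `dlow` is the boundary map out of `p`-chains (so `coboundary dlow` is the coboundary
into `p`-cochains) and `dhigh` the boundary map into `p`-chains (so `coboundary dhigh` is
the coboundary out of `p`-cochains). -/
theorem valid_iff_cocycle_basis {F : Type*} [Field F] {ι κ μ : Type*}
    [Fintype ι] [Fintype κ] [Fintype μ] [DecidableEq ι] [DecidableEq μ] {g : ℕ}
    (dlow : (ι → F) →ₗ[F] (κ → F)) (dhigh : (μ → F) →ₗ[F] (ι → F))
    (hdd : dlow ∘ₗ dhigh = 0)
    (a : ι → Fin g → F) :
    IsValidAnnotation dlow dhigh a ↔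
      ∃ hco : ∀ j : Fin g, (fun σ => a σ j) ∈ LinearMap.ker (coboundary dhigh),
        LinearIndependent F
          (fun j : Fin g =>
            (Submodule.Quotient.mk (⟨fun σ => a σ j, hco j⟩ :
                LinearMap.ker (coboundary dhigh)) :
              (LinearMap.ker (coboundary dhigh)) ⧸
                (LinearMap.range (coboundary dlow)).comap
                  (LinearMap.ker (coboundary dhigh)).subtype)) ∧
        Submodule.span F (Set.range (fun j : Fin g =>
            (Submodule.Quotient.mk (⟨fun σ => a σ j, hco j⟩ :
                LinearMap.ker (coboundary dhigh)) :
              (LinearMap.ker (coboundary dhigh)) ⧸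
                (LinearMap.range (coboundary dlow)).comap
                  (LinearMap.ker (coboundary dhigh)).subtype))) = ⊤ := by
  classical
  have hZc : LinearMap.ker (coboundary dhigh) = dotAnn (LinearMap.range dhigh) :=
    ker_coboundary_eq dhigh
  have hBc : LinearMap.range (coboundary dlow) = dotAnn (LinearMap.ker dlow) :=
    range_coboundary_eq dlow
  have hBdZ : LinearMap.range dhigh ≤ LinearMap.ker dlow := by
    rintro _ ⟨c, rfl⟩
    rw [LinearMap.mem_ker]
    have := congrArg (fun f => f c) hdd
    simpa using this
  have hBcZc : LinearMap.range (coboundary dlow) ≤ LinearMap.ker (coboundary dhigh) := by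
    rw [hZc, hBc]; exact dotAnn_antitone hBdZ
  -- dimension bookkeeping
  have hcomap1 : Module.finrank F
        ((LinearMap.range dhigh).comap (LinearMap.ker dlow).subtype)
      = Module.finrank F (LinearMap.range dhigh) :=
    (Submodule.comapSubtypeEquivOfLe hBdZ).finrank_eq
  have hcomap2 : Module.finrank F
        ((LinearMap.range (coboundary dlow)).comap (LinearMap.ker (coboundary dhigh)).subtype)
      = Module.finrank F (LinearMap.range (coboundary dlow)) :=
    (Submodule.comapSubtypeEquivOfLe hBcZc).finrank_eq
  have hq1 : Module.finrank F ((LinearMap.ker dlow) ⧸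
        (LinearMap.range dhigh).comap (LinearMap.ker dlow).subtype)
      + Module.finrank F (LinearMap.range dhigh)
      = Module.finrank F (LinearMap.ker dlow) := by
    rw [← hcomap1]
    exact Submodule.finrank_quotient_add_finrank _
  have hq2 : Module.finrank F ((LinearMap.ker (coboundary dhigh)) ⧸
        (LinearMap.range (coboundary dlow)).comap (LinearMap.ker (coboundary dhigh)).subtype)
      + Module.finrank F (LinearMap.range (coboundary dlow))
      = Module.finrank F (LinearMap.ker (coboundary dhigh)) := by
    rw [← hcomap2]
    exact Submodule.finrank_quotient_add_finrank _
  have h3 := finrank_dotAnn_add (LinearMap.range dhigh)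
  have h4 := finrank_dotAnn_add (LinearMap.ker dlow)
  have hZcrk : Module.finrank F (LinearMap.ker (coboundary dhigh))
      = Module.finrank F (dotAnn (LinearMap.range dhigh)) := by rw [hZc]
  have hBcrk : Module.finrank F (LinearMap.range (coboundary dlow))
      = Module.finrank F (dotAnn (LinearMap.ker dlow)) := by rw [hBc]
  have hrn := LinearMap.finrank_range_add_finrank_ker dlow
  have hdim : Module.finrank F ((LinearMap.ker dlow) ⧸
        (LinearMap.range dhigh).comap (LinearMap.ker dlow).subtype)
      = Module.finrank F ((LinearMap.ker (coboundary dhigh)) ⧸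
        (LinearMap.range (coboundary dlow)).comap
          (LinearMap.ker (coboundary dhigh)).subtype) := by
    omega
  constructor
  · rintro ⟨hg, hiff⟩
    have ha0 : annChain a (0 : ι → F) = 0 := by simp [annChain]
    have hco : ∀ j : Fin g, (fun σ => a σ j) ∈ LinearMap.ker (coboundary dhigh) := by
      intro j
      rw [hZc, mem_dotAnn]
      rintro _ ⟨c, rfl⟩
      have hw : dhigh c ∈ LinearMap.ker dlow := hBdZ ⟨c, rfl⟩
      have h0 : annChain a (dhigh c) = annChain a 0 := by
        rw [hiff (dhigh c) 0 hw (Submodule.zero_mem _), homCls_eq_iff]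
        exact ⟨c, by simp⟩
      have := congrArg (fun f => f j) h0
      simp only [annChain_apply, ha0] at this
      simpa using this
    -- surjectivity of the annotation map restricted to cycles
    have hker : LinearMap.ker ((annMap a).comp (LinearMap.ker dlow).subtype)
        = (LinearMap.range dhigh).comap (LinearMap.ker dlow).subtype := by
      ext x
      rw [LinearMap.mem_ker, Submodule.mem_comap]
      have h0 : (annMap a).comp (LinearMap.ker dlow).subtype x
          = annChain a (x : ι → F) := rfl
      rw [h0]
      constructor
      · intro h
        have := (hiff (x : ι → F) 0 x.2 (Submodule.zero_mem _)).mp (by rw [h, ha0])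
        rw [homCls_eq_iff] at this
        simpa using this
      · intro h
        have := (hiff (x : ι → F) 0 x.2 (Submodule.zero_mem _)).mpr
          (by rw [homCls_eq_iff]; simpa using h)
        rw [ha0] at this
        exact this
    have hrksum := LinearMap.finrank_range_add_finrank_ker
      ((annMap a).comp (LinearMap.ker dlow).subtype)
    rw [hker] at hrksum
    have hrange : Module.finrank F
        (LinearMap.range ((annMap a).comp (LinearMap.ker dlow).subtype)) = g := by
      omega
    have htop : LinearMap.range ((annMap a).comp (LinearMap.ker dlow).subtype) = ⊤ := by
      apply Submodule.eq_top_of_finrank_eq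
      rw [hrange]
      simp [Module.finrank_pi]
    have hsurj : ∀ v : Fin g → F, ∃ x : LinearMap.ker dlow, annChain a (x : ι → F) = v := by
      intro v
      have hv : v ∈ LinearMap.range ((annMap a).comp (LinearMap.ker dlow).subtype) := by
        rw [htop]; trivial
      obtain ⟨x, hx⟩ := hv
      exact ⟨x, hx⟩
    have hind : LinearIndependent F
        (fun j : Fin g =>
          (Submodule.Quotient.mk (⟨fun σ => a σ j, hco j⟩ :
              LinearMap.ker (coboundary dhigh)) :
            (LinearMap.ker (coboundary dhigh)) ⧸
              (LinearMap.range (coboundary dlow)).comap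
                (LinearMap.ker (coboundary dhigh)).subtype)) := by
      rw [Fintype.linearIndependent_iff]
      intro c hc j
      have hsum : (∑ j' : Fin g, c j' • (Submodule.Quotient.mk
            (⟨fun σ => a σ j', hco j'⟩ : LinearMap.ker (coboundary dhigh)) :
            (LinearMap.ker (coboundary dhigh)) ⧸
              (LinearMap.range (coboundary dlow)).comap
                (LinearMap.ker (coboundary dhigh)).subtype))
          = Submodule.Quotient.mk (∑ j' : Fin g, c j' •
              (⟨fun σ => a σ j', hco j'⟩ : LinearMap.ker (coboundary dhigh))) := by
        simp only [← Submodule.mkQ_apply, map_sum, map_smul]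
      rw [hsum, Submodule.Quotient.mk_eq_zero, Submodule.mem_comap] at hc
      have hcoe : ((∑ j' : Fin g, c j' •
            (⟨fun σ => a σ j', hco j'⟩ : LinearMap.ker (coboundary dhigh)) :
            LinearMap.ker (coboundary dhigh)) : ι → F)
          = ∑ j' : Fin g, c j' • (fun σ => a σ j') := by
        simp
      have hmem : (∑ j' : Fin g, c j' • (fun σ => a σ j') : ι → F)
          ∈ dotAnn (LinearMap.ker dlow) := by
        rw [← hBc, ← hcoe]
        exact hc
      obtain ⟨x, hx⟩ := hsurj (Pi.single j 1)
      have h0 := mem_dotAnn.mp hmem (x : ι → F) x.2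
      rw [dot_sum_smul] at h0
      have h5 : ∀ j' : Fin g, dotProduct (fun σ => a σ j') (x : ι → F)
          = (Pi.single j 1 : Fin g → F) j' := by
        intro j'
        rw [← annChain_apply, hx]
      simp only [h5] at h0
      simpa [Pi.single_apply] using h0
    refine ⟨hco, hind, ?_⟩
    apply hind.span_eq_top_of_card_eq_finrank'
    rw [Fintype.card_fin, ← hdim, ← hg]
  · rintro ⟨hco, hind, hspan⟩
    have hfinrk : Module.finrank F ((LinearMap.ker (coboundary dhigh)) ⧸
          (LinearMap.range (coboundary dlow)).comap
            (LinearMap.ker (coboundary dhigh)).subtype) = g := by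
      rw [Module.finrank_eq_card_basis (Module.Basis.mk hind (ge_of_eq hspan)), Fintype.card_fin]
    refine ⟨by omega, ?_⟩
    intro z₁ z₂ h₁ h₂
    rw [homCls_eq_iff]
    have hphi : ∀ j : Fin g, dotProduct (fun σ => a σ j) (z₁ - z₂)
        = annChain a z₁ j - annChain a z₂ j := by
      intro j
      rw [dotProduct_sub, ← annChain_apply, ← annChain_apply]
    constructor
    · intro h
      have hz : z₁ - z₂ ∈ LinearMap.ker dlow := sub_mem h₁ h₂
      have hdots : ∀ j : Fin g, dotProduct (fun σ => a σ j) (z₁ - z₂) = 0 := by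
        intro j
        rw [hphi j, congrFun h j, sub_self]
      have hBdeq : LinearMap.range dhigh = dotAnn (LinearMap.ker (coboundary dhigh)) := by
        rw [hZc, dotAnn_dotAnn]
      rw [hBdeq, mem_dotAnn]
      intro ψ hψ
      have hmemtop : (Submodule.Quotient.mk
            (⟨ψ, hψ⟩ : LinearMap.ker (coboundary dhigh)) :
            (LinearMap.ker (coboundary dhigh)) ⧸
              (LinearMap.range (coboundary dlow)).comap
                (LinearMap.ker (coboundary dhigh)).subtype)
          ∈ Submodule.span F (Set.range (fun j : Fin g =>
            (Submodule.Quotient.mk (⟨fun σ => a σ j, hco j⟩ :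
                LinearMap.ker (coboundary dhigh)) :
              (LinearMap.ker (coboundary dhigh)) ⧸
                (LinearMap.range (coboundary dlow)).comap
                  (LinearMap.ker (coboundary dhigh)).subtype))) := by
        rw [hspan]; trivial
      obtain ⟨c, hcψ⟩ := Submodule.mem_span_range_iff_exists_fun F |>.mp hmemtop
      have hsum : (∑ j' : Fin g, c j' • (Submodule.Quotient.mk
            (⟨fun σ => a σ j', hco j'⟩ : LinearMap.ker (coboundary dhigh)) :
            (LinearMap.ker (coboundary dhigh)) ⧸
              (LinearMap.range (coboundary dlow)).comap
                (LinearMap.ker (coboundary dhigh)).subtype))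
          = Submodule.Quotient.mk (∑ j' : Fin g, c j' •
              (⟨fun σ => a σ j', hco j'⟩ : LinearMap.ker (coboundary dhigh))) := by
        simp only [← Submodule.mkQ_apply, map_sum, map_smul]
      rw [hsum] at hcψ
      have hsub : ((⟨ψ, hψ⟩ : LinearMap.ker (coboundary dhigh))
            - ∑ j' : Fin g, c j' •
              (⟨fun σ => a σ j', hco j'⟩ : LinearMap.ker (coboundary dhigh)))
          ∈ (LinearMap.range (coboundary dlow)).comap
              (LinearMap.ker (coboundary dhigh)).subtype :=
        (Submodule.Quotient.eq _).mp hcψ.symm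
      rw [Submodule.mem_comap] at hsub
      have hcoe : (((⟨ψ, hψ⟩ : LinearMap.ker (coboundary dhigh))
            - ∑ j' : Fin g, c j' •
              (⟨fun σ => a σ j', hco j'⟩ : LinearMap.ker (coboundary dhigh)) :
            LinearMap.ker (coboundary dhigh)) : ι → F)
          = ψ - ∑ j' : Fin g, c j' • (fun σ => a σ j') := by
        simp
      have hmem2 : (ψ - ∑ j' : Fin g, c j' • (fun σ => a σ j') : ι → F)
          ∈ dotAnn (LinearMap.ker dlow) := by
        rw [← hBc, ← hcoe]
        exact hsub
      have h6 := mem_dotAnn.mp hmem2 (z₁ - z₂) hz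
      rw [sub_dotProduct, dot_sum_smul] at h6
      simp only [hdots, mul_zero, Finset.sum_const_zero, sub_zero] at h6
      rw [dotProduct_comm]
      exact h6
    · intro h
      funext j
      have h0 : dotProduct (fun σ => a σ j) (z₁ - z₂) = 0 := by
        have := hco j
        rw [hZc] at this
        exact mem_dotAnn.mp this _ h
      rw [hphi j] at h0
      exact sub_eq_zero.mp h0
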